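/- Let M and N be real symmetric positive semidefinite d×d matrices with M ⪯ N, and suppose both M and N are singular (each has smallest eigenvalue 0). Let λ > 0 and α ≥ 0 be real numbers. Then cond(M + (α + λ)·I_d) ≤ cond(N + λ·I_d), where for a positive definite matrix P, cond(P) denotes the ratio of the largest eigenvalue of P to the smallest eigenvalue of P. -/

import Mathlib

open Matrix

/-- Condition number of a (positive definite) real matrix: the ratio of its largest
eigenvalue to its smallest eigenvalue, expressed via the real spectrum. -/
noncomputable def matrixCond {d : ℕ} (P : Matrix (Fin d) (Fin d) ℝ) : ℝ :=
  sSup (spectrum ℝ P) / sInf (spectrum ℝ P)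

section Aux

variable {d : ℕ}

/-- The real spectrum of `A + c • 1` is the shift of the spectrum of `A`. -/
lemma spectrum_add_smul_one (A : Matrix (Fin d) (Fin d) ℝ) (c : ℝ) :
    spectrum ℝ (A + c • (1 : Matrix (Fin d) (Fin d) ℝ)) = (· + c) '' spectrum ℝ A := by
  have h := spectrum.add_singleton_eq (R := ℝ) A c
  rw [Algebra.algebraMap_eq_smul_one] at h
  rw [← h, Set.add_singleton]

lemma sSup_image_add_const (s : Set ℝ) (hne : s.Nonempty) (hbdd : BddAbove s) (c : ℝ) :
    sSup ((· + c) '' s) = sSup s + c :=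
  (Monotone.map_csSup_of_continuousAt (f := (· + c))
    (continuous_id.add continuous_const).continuousAt
    (fun _ _ h => add_le_add_left h c) hne hbdd).symm

lemma sInf_image_add_const (s : Set ℝ) (hne : s.Nonempty) (hbdd : BddBelow s) (c : ℝ) :
    sInf ((· + c) '' s) = sInf s + c :=
  (Monotone.map_csInf_of_continuousAt (f := (· + c))
    (continuous_id.add continuous_const).continuousAt
    (fun _ _ h => add_le_add_left h c) hne hbdd).symm

/-- Conjugating `c • 1 - A` by the eigenvector unitary yields a diagonal matrix. -/
lemma conj_smul_one_sub {A : Matrix (Fin d) (Fin d) ℝ} (hA : A.IsHermitian) (c : ℝ) :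
    star (hA.eigenvectorUnitary : Matrix (Fin d) (Fin d) ℝ)
        * (c • (1 : Matrix (Fin d) (Fin d) ℝ) - A)
        * (hA.eigenvectorUnitary : Matrix (Fin d) (Fin d) ℝ)
      = diagonal (fun i => c - hA.eigenvalues i) := by
  have hU : star (hA.eigenvectorUnitary : Matrix (Fin d) (Fin d) ℝ)
      * (hA.eigenvectorUnitary : Matrix (Fin d) (Fin d) ℝ) = 1 :=
    (Matrix.mem_unitaryGroup_iff').mp hA.eigenvectorUnitary.2
  have hdiag := hA.conjStarAlgAut_star_eigenvectorUnitary
  rw [Unitary.conjStarAlgAut_star_apply] at hdiag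
  rw [mul_sub, sub_mul, hdiag]
  rw [Matrix.mul_smul, mul_one, Matrix.smul_mul, hU]
  rw [smul_one_eq_diagonal, ← diagonal_sub]
  congr 1

/-- If every eigenvalue of a hermitian `A` is at most `c`, then `c • 1 - A` is PSD. -/
lemma psd_smul_one_sub {A : Matrix (Fin d) (Fin d) ℝ} (hA : A.IsHermitian) {c : ℝ}
    (h : ∀ i, hA.eigenvalues i ≤ c) :
    (c • (1 : Matrix (Fin d) (Fin d) ℝ) - A).PosSemidef := by
  have hU : (hA.eigenvectorUnitary : Matrix (Fin d) (Fin d) ℝ)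
      * star (hA.eigenvectorUnitary : Matrix (Fin d) (Fin d) ℝ) = 1 :=
    (Matrix.mem_unitaryGroup_iff).mp hA.eigenvectorUnitary.2
  have key : c • (1 : Matrix (Fin d) (Fin d) ℝ) - A
      = (hA.eigenvectorUnitary : Matrix (Fin d) (Fin d) ℝ)
        * diagonal (fun i => c - hA.eigenvalues i)
        * star (hA.eigenvectorUnitary : Matrix (Fin d) (Fin d) ℝ) := by
    rw [← conj_smul_one_sub hA c, ← mul_assoc, ← mul_assoc, hU, one_mul,
      mul_assoc, hU, mul_one]
  rw [key]
  have hdiag : (diagonal (fun i => c - hA.eigenvalues i) :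
      Matrix (Fin d) (Fin d) ℝ).PosSemidef :=
    posSemidef_diagonal_iff.mpr fun i => sub_nonneg.mpr (h i)
  simpa [Matrix.star_eq_conjTranspose] using
    hdiag.mul_mul_conjTranspose_same (hA.eigenvectorUnitary : Matrix (Fin d) (Fin d) ℝ)

/-- If `c • 1 - A` is PSD for a hermitian `A`, then every eigenvalue of `A` is at most `c`. -/
lemma eigenvalues_le_of_psd {A : Matrix (Fin d) (Fin d) ℝ} (hA : A.IsHermitian) {c : ℝ}
    (h : (c • (1 : Matrix (Fin d) (Fin d) ℝ) - A).PosSemidef) :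
    ∀ i, hA.eigenvalues i ≤ c := by
  have hconj := h.conjTranspose_mul_mul_same
    (hA.eigenvectorUnitary : Matrix (Fin d) (Fin d) ℝ)
  rw [← Matrix.star_eq_conjTranspose, conj_smul_one_sub hA c] at hconj
  intro i
  have := posSemidef_diagonal_iff.mp hconj i
  linarith

end Aux

/-- **Well-conditioned property of RFD, part 2.**  If `M ⪯ N` are symmetric PSD matrices,
both singular (smallest eigenvalue `0`), then for `λ > 0` and `α ≥ 0`,
`matrixCond (M + (α + λ)·I) ≤ matrixCond (N + λ·I)`. -/
theorem rfd_well_conditioned_two {d : ℕ} (hd : 0 < d)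
    (M N : Matrix (Fin d) (Fin d) ℝ) (hM : M.PosSemidef) (hN : N.PosSemidef)
    (hMN : (N - M).PosSemidef)
    (hMsing : 0 ∈ spectrum ℝ M) (hNsing : 0 ∈ spectrum ℝ N)
    (lam α : ℝ) (hlam : 0 < lam) (hα : 0 ≤ α) :
    matrixCond (M + (α + lam) • (1 : Matrix (Fin d) (Fin d) ℝ))
      ≤ matrixCond (N + lam • (1 : Matrix (Fin d) (Fin d) ℝ)) := by
  -- basic facts about the spectra
  have hMfin : (spectrum ℝ M).Finite := Matrix.finite_real_spectrum
  have hNfin : (spectrum ℝ N).Finite := Matrix.finite_real_spectrum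
  have hMne : (spectrum ℝ M).Nonempty := ⟨0, hMsing⟩
  have hNne : (spectrum ℝ N).Nonempty := ⟨0, hNsing⟩
  have hMba : BddAbove (spectrum ℝ M) := hMfin.bddAbove
  have hNba : BddAbove (spectrum ℝ N) := hNfin.bddAbove
  have hMbb : BddBelow (spectrum ℝ M) := hMfin.bddBelow
  have hNbb : BddBelow (spectrum ℝ N) := hNfin.bddBelow
  -- all spectrum elements are nonnegative
  have hMnonneg : ∀ x ∈ spectrum ℝ M, (0:ℝ) ≤ x := by
    intro x hx
    rw [hM.1.spectrum_real_eq_range_eigenvalues] at hx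
    obtain ⟨i, rfl⟩ := hx
    exact hM.eigenvalues_nonneg i
  have hNnonneg : ∀ x ∈ spectrum ℝ N, (0:ℝ) ≤ x := by
    intro x hx
    rw [hN.1.spectrum_real_eq_range_eigenvalues] at hx
    obtain ⟨i, rfl⟩ := hx
    exact hN.eigenvalues_nonneg i
  -- smallest eigenvalues are zero
  have hMinf : sInf (spectrum ℝ M) = 0 :=
    le_antisymm (csInf_le hMbb hMsing) (le_csInf hMne hMnonneg)
  have hNinf : sInf (spectrum ℝ N) = 0 :=
    le_antisymm (csInf_le hNbb hNsing) (le_csInf hNne hNnonneg)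
  set a := sSup (spectrum ℝ M) with ha
  set b := sSup (spectrum ℝ N) with hb
  have ha0 : 0 ≤ a := le_csSup hMba hMsing
  have hb0 : 0 ≤ b := le_csSup hNba hNsing
  -- a ≤ b since M ⪯ N
  have hab : a ≤ b := by
    -- b • 1 - N is PSD
    have hNev : ∀ i, hN.1.eigenvalues i ≤ b := fun i =>
      le_csSup hNba (hN.1.eigenvalues_mem_spectrum_real i)
    have h1 : (b • (1 : Matrix (Fin d) (Fin d) ℝ) - N).PosSemidef :=
      psd_smul_one_sub hN.1 hNev
    -- b • 1 - M = (b • 1 - N) + (N - M) is PSD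
    have h2 : (b • (1 : Matrix (Fin d) (Fin d) ℝ) - M).PosSemidef := by
      have := h1.add hMN
      have heq : b • (1 : Matrix (Fin d) (Fin d) ℝ) - N + (N - M)
          = b • (1 : Matrix (Fin d) (Fin d) ℝ) - M := by abel
      rwa [heq] at this
    have hMev : ∀ i, hM.1.eigenvalues i ≤ b := eigenvalues_le_of_psd hM.1 h2
    apply csSup_le hMne
    intro x hx
    rw [hM.1.spectrum_real_eq_range_eigenvalues] at hx
    obtain ⟨i, rfl⟩ := hx
    exact hMev i
  -- compute the two condition numbers
  have hspecM := spectrum_add_smul_one M (α + lam)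
  have hspecN := spectrum_add_smul_one N lam
  have hcondM : matrixCond (M + (α + lam) • (1 : Matrix (Fin d) (Fin d) ℝ))
      = (a + (α + lam)) / (α + lam) := by
    rw [matrixCond, hspecM, sSup_image_add_const _ hMne hMba,
      sInf_image_add_const _ hMne hMbb, hMinf, zero_add]
  have hcondN : matrixCond (N + lam • (1 : Matrix (Fin d) (Fin d) ℝ))
      = (b + lam) / lam := by
    rw [matrixCond, hspecN, sSup_image_add_const _ hNne hNba,
      sInf_image_add_const _ hNne hNbb, hNinf, zero_add]
  rw [hcondM, hcondN]
  have hc : 0 < α + lam := by linarith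
  rw [div_le_div_iff₀ hc hlam]
  nlinarith
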